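/- The skew energy of the uniformly oriented even cycle C_n^- (all arcs in the same cyclic direction) with n even equals 4·cot(π/n), while the skew energy of C_n^+ (all arcs in one direction except one) with n even equals 4·csc(π/n). -/

import Mathlib

open Matrix Polynomial

/-- The skew energy: the sum of the norms of the eigenvalues (with multiplicity). -/
noncomputable def skewEnergy {V : Type*} [Fintype V] [DecidableEq V]
    (S : Matrix V V ℝ) : ℝ :=
  (((S.map Complex.ofReal).charpoly.roots).map (fun z => ‖z‖)).sum

section chp
variable {V : Type*} [Fintype V] [DecidableEq V]

lemma myCharpoly_conj (A U D : Matrix V V ℂ) (hU : U.det ≠ 0) (h : A * U = U * D) :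
    A.charpoly = D.charpoly := by
  have key : charmatrix A * (Polynomial.C : ℂ →+* ℂ[X]).mapMatrix U
      = (Polynomial.C : ℂ →+* ℂ[X]).mapMatrix U * charmatrix D := by
    unfold charmatrix
    rw [sub_mul, mul_sub]
    congr 1
    · exact (Matrix.scalar_commute X (fun r => Commute.all X r) _).eq
    · rw [← _root_.map_mul, ← _root_.map_mul, h]
  have hdet := congrArg Matrix.det key
  rw [det_mul, det_mul] at hdet
  have hCU : ((Polynomial.C : ℂ →+* ℂ[X]).mapMatrix U).det = Polynomial.C U.det :=
    (RingHom.map_det _ _).symm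
  rw [hCU] at hdet
  have hC0 : (Polynomial.C U.det : ℂ[X]) ≠ 0 := by simpa using hU
  unfold Matrix.charpoly
  rw [mul_comm] at hdet
  exact mul_left_cancel₀ hC0 hdet

lemma myCharpoly_diagonal (d : V → ℂ) :
    (Matrix.diagonal d).charpoly = ∏ i, (X - Polynomial.C (d i)) := by
  have : charmatrix (Matrix.diagonal d) = Matrix.diagonal (fun i => X - Polynomial.C (d i)) := by
    ext i j
    by_cases hij : i = j
    · subst hij; simp [charmatrix_apply_eq]
    · rw [charmatrix_apply_ne _ _ _ hij]; simp [Matrix.diagonal_apply_ne _ hij, hij]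
  rw [Matrix.charpoly, this, det_diagonal]

lemma skewEnergy_eq_sum (S : Matrix V V ℝ) (d : V → ℂ) (U : Matrix V V ℂ) (hU : U.det ≠ 0)
    (h : S.map Complex.ofReal * U = U * Matrix.diagonal d) :
    skewEnergy S = ∑ i, ‖d i‖ := by
  unfold skewEnergy
  rw [myCharpoly_conj _ _ _ hU h, myCharpoly_diagonal]
  have : (∏ i, (X - Polynomial.C (d i)))
      = ((Finset.univ.val.map d).map fun a => X - Polynomial.C a).prod := by
    rw [Multiset.map_map]; rfl
  rw [this, Polynomial.roots_multiset_prod_X_sub_C, Multiset.map_map]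
  rfl

end chp

section zmodaux
variable {n : ℕ} [NeZero n]

/-- The equivalence between `Fin n` and `ZMod n`. -/
def finZModEquiv (n : ℕ) [NeZero n] : Fin n ≃ ZMod n where
  toFun a := ((a : ℕ) : ZMod n)
  invFun x := ⟨x.val, x.val_lt⟩
  left_inv a := by
    ext
    simp [ZMod.val_cast_of_lt a.isLt]
  right_inv x := ZMod.natCast_rightInverse x

lemma finZModEquiv_val (a : Fin n) : ((finZModEquiv n a : ZMod n)).val = (a : ℕ) :=
  ZMod.val_cast_of_lt a.isLt

lemma det_ne_zero_of_pow_val (g : ZMod n → ℂ) (hg : Function.Injective g)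
    (U : Matrix (ZMod n) (ZMod n) ℂ) (hU : ∀ j k, U j k = g k ^ (ZMod.val j)) :
    U.det ≠ 0 := by
  have h1 : U.det = (Matrix.vandermonde (fun b : Fin n => g (finZModEquiv n b)))ᵀ.det := by
    rw [← Matrix.det_submatrix_equiv_self (finZModEquiv n) U]
    congr 1
    ext a b
    rw [Matrix.submatrix_apply, hU, finZModEquiv_val, Matrix.transpose_apply,
      Matrix.vandermonde_apply]
  rw [h1, Matrix.det_transpose, Matrix.det_vandermonde]
  apply Finset.prod_ne_zero_iff.2
  intro i _
  apply Finset.prod_ne_zero_iff.2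
  intro j hj
  have hij : j ≠ i := (Finset.mem_Ioi.1 hj).ne'
  have : (finZModEquiv n) j ≠ (finZModEquiv n) i := by
    simp only [ne_eq, EmbeddingLike.apply_eq_iff_eq]
    exact fun h => hij (by exact_mod_cast h)
  exact sub_ne_zero_of_ne (fun hc => this (hg hc))

lemma sum_zmod_val (f : ℕ → ℝ) : ∑ k : ZMod n, f (ZMod.val k) = ∑ a ∈ Finset.range n, f a := by
  rw [← Fin.sum_univ_eq_sum_range (fun a => f a) n]
  exact Fintype.sum_equiv (finZModEquiv n).symm _ _ (fun x => by
    simp only [← finZModEquiv_val (((finZModEquiv n).symm x))]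
    rw [Equiv.apply_symm_apply])

lemma neg_one_eq_castX : ((n - 1 : ℕ) : ZMod n) = -1 := by
  have h1 : 1 ≤ n := Nat.one_le_iff_ne_zero.2 (NeZero.ne n)
  push_cast [Nat.cast_sub h1]
  simp

lemma cast_val_eqX (i : ZMod n) : ((i.val : ℕ) : ZMod n) = i := ZMod.natCast_rightInverse i

lemma val_add_one {i : ZMod n} (hi : i ≠ -1) : (i + 1).val = i.val + 1 := by
  have h1 : 1 ≤ n := Nat.one_le_iff_ne_zero.2 (NeZero.ne n)
  have hlt : i.val < n := ZMod.val_lt i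
  have hne : i.val ≠ n - 1 := by
    intro hc
    apply hi
    rw [← cast_val_eqX i, hc, neg_one_eq_castX]
  have h2 : i.val + 1 < n := by omega
  have : i + 1 = ((i.val + 1 : ℕ) : ZMod n) := by
    push_cast [cast_val_eqX i]
    ring
  rw [this, ZMod.val_cast_of_lt h2]

lemma val_sub_one {i : ZMod n} (hi : i ≠ 0) : (i - 1).val = i.val - 1 := by
  have h1 : 1 ≤ i.val := Nat.pos_of_ne_zero (fun h => hi ((ZMod.val_eq_zero i).1 h))
  have hlt : i.val - 1 < n := by have := ZMod.val_lt i; omega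
  have : i - 1 = ((i.val - 1 : ℕ) : ZMod n) := by
    push_cast [Nat.cast_sub h1, cast_val_eqX i]
    ring
  rw [this, ZMod.val_cast_of_lt hlt]

end zmodaux

section trig
open Real
open Real

lemma sum_sin_tele (m : ℕ) (hm : 1 ≤ m) :
    ∑ b ∈ Finset.range m, Real.sin (π * b / m) = Real.cos (π / (2 * m)) / Real.sin (π / (2 * m)) := by
  set h : ℝ := π / (2 * m) with hh
  have hm0 : (m : ℝ) ≠ 0 := Nat.cast_ne_zero.2 (by omega)
  have hm1 : (1:ℝ) ≤ m := by exact_mod_cast hm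
  have hmpos : (0:ℝ) < m := by positivity
  have hpos : 0 < Real.sin h := by
    apply Real.sin_pos_of_pos_of_lt_pi
    · positivity
    · rw [hh, div_lt_iff₀ (by positivity)]
      nlinarith [Real.pi_pos]
  have key : ∀ b : ℕ, Real.sin (π * b / m) * (2 * Real.sin h) =
      Real.cos ((2 * (b:ℝ) - 1) * h) - Real.cos ((2 * (b:ℝ) + 1) * h) := by
    intro b
    rw [Real.cos_sub_cos]
    have e1 : ((2 * (b:ℝ) - 1) * h + (2 * (b:ℝ) + 1) * h) / 2 = π * b / m := by
      rw [hh]; field_simp; ring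
    have e2 : ((2 * (b:ℝ) - 1) * h - (2 * (b:ℝ) + 1) * h) / 2 = -h := by ring
    rw [e1, e2, Real.sin_neg]
    ring
  have hsum : (∑ b ∈ Finset.range m, Real.sin (π * b / m)) * (2 * Real.sin h) =
      ∑ b ∈ Finset.range m, (Real.cos ((2 * (b:ℝ) - 1) * h) - Real.cos ((2 * (b:ℝ) + 1) * h)) := by
    rw [Finset.sum_mul]
    exact Finset.sum_congr rfl fun b _ => key b
  have htele : ∑ b ∈ Finset.range m, (Real.cos ((2 * (b:ℝ) - 1) * h) - Real.cos ((2 * (b:ℝ) + 1) * h))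
      = 2 * Real.cos h := by
    have t := Finset.sum_range_sub' (fun b : ℕ => Real.cos ((2 * (b:ℝ) - 1) * h)) m
    simp only [Nat.cast_add, Nat.cast_one] at t
    have e : ∀ b : ℕ, (2 * ((b:ℝ) + 1) - 1) * h = (2 * (b:ℝ) + 1) * h := fun b => by ring
    simp only [e] at t
    rw [t]
    have e0 : (2 * ((0:ℕ):ℝ) - 1) * h = -h := by norm_num
    have em : (2 * (m:ℝ) - 1) * h = π - h := by rw [hh]; field_simp
    rw [e0, em, Real.cos_neg, Real.cos_pi_sub]
    ring
  have := hsum.trans htele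
  field_simp at this ⊢
  linarith [this]

lemma sum_sin_odd_tele (m : ℕ) (hm : 1 ≤ m) :
    ∑ b ∈ Finset.range m, Real.sin ((2 * b + 1) * (π / (2 * m))) = 1 / Real.sin (π / (2 * m)) := by
  set h : ℝ := π / (2 * m) with hh
  have hm0 : (m : ℝ) ≠ 0 := Nat.cast_ne_zero.2 (by omega)
  have hm1 : (1:ℝ) ≤ m := by exact_mod_cast hm
  have hmpos : (0:ℝ) < m := by positivity
  have hpos : 0 < Real.sin h := by
    apply Real.sin_pos_of_pos_of_lt_pi
    · positivity
    · rw [hh, div_lt_iff₀ (by positivity)]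
      nlinarith [Real.pi_pos]
  have key : ∀ b : ℕ, Real.sin ((2 * (b:ℝ) + 1) * h) * (2 * Real.sin h) =
      Real.cos (2 * (b:ℝ) * h) - Real.cos ((2 * ((b:ℝ) + 1)) * h) := by
    intro b
    rw [Real.cos_sub_cos]
    have e1 : (2 * (b:ℝ) * h + 2 * ((b:ℝ) + 1) * h) / 2 = (2 * (b:ℝ) + 1) * h := by ring
    have e2 : (2 * (b:ℝ) * h - 2 * ((b:ℝ) + 1) * h) / 2 = -h := by ring
    rw [e1, e2, Real.sin_neg]
    ring
  have hsum : (∑ b ∈ Finset.range m, Real.sin ((2 * (b:ℝ) + 1) * h)) * (2 * Real.sin h) =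
      ∑ b ∈ Finset.range m, (Real.cos (2 * (b:ℝ) * h) - Real.cos (2 * ((b:ℝ) + 1) * h)) := by
    rw [Finset.sum_mul]
    exact Finset.sum_congr rfl fun b _ => key b
  have htele : ∑ b ∈ Finset.range m, (Real.cos (2 * (b:ℝ) * h) - Real.cos (2 * ((b:ℝ) + 1) * h))
      = 2 := by
    have t := Finset.sum_range_sub' (fun b : ℕ => Real.cos (2 * (b:ℝ) * h)) m
    simp only [Nat.cast_add, Nat.cast_one] at t
    rw [t]
    have em : 2 * (m:ℝ) * h = π := by rw [hh]; field_simp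
    rw [em]
    norm_num
  have heq := hsum.trans htele
  field_simp at heq ⊢
  simp only [mul_comm h]
  linear_combination heq

open Real

lemma range_two_mul_sum (m : ℕ) (f : ℕ → ℝ) :
    ∑ a ∈ Finset.range (2 * m), f a = ∑ a ∈ Finset.range m, f a + ∑ a ∈ Finset.range m, f (m + a) := by
  rw [two_mul, Finset.sum_range_add]

lemma sum_abs_sin_even {n : ℕ} (hn : 3 ≤ n) (he : Even n) :
    ∑ a ∈ Finset.range n, |Real.sin (2 * π * a / n)| = 2 * Real.cot (π / n) := by
  obtain ⟨m, hm⟩ := he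
  have hm2 : 2 ≤ m := by omega
  have hm0 : (m:ℝ) ≠ 0 := Nat.cast_ne_zero.2 (by omega)
  subst hm
  rw [show m + m = 2 * m by ring] at *
  have hang : ∀ a : ℕ, 2 * π * a / (2 * m : ℕ) = π * a / m := by
    intro a; push_cast; field_simp
  simp only [hang]
  rw [range_two_mul_sum]
  have h2 : ∀ a : ℕ, |Real.sin (π * (m + a : ℕ) / m)| = |Real.sin (π * a / m)| := by
    intro a
    have : π * ((m:ℝ) + a) / m = π * a / m + π := by field_simp; ring
    push_cast
    rw [this, Real.sin_add]
    simp
  simp only [h2]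
  have h3 : ∀ a ∈ Finset.range m, |Real.sin (π * a / m)| = Real.sin (π * a / m) := by
    intro a ha
    rw [abs_of_nonneg]
    apply Real.sin_nonneg_of_nonneg_of_le_pi
    · positivity
    · rw [div_le_iff₀ (by positivity)]
      have : (a:ℝ) ≤ m := by
        have := Finset.mem_range.1 ha; exact_mod_cast this.le
      nlinarith [Real.pi_pos]
  rw [Finset.sum_congr rfl h3, sum_sin_tele m (by omega), Real.cot_eq_cos_div_sin]
  have : π / ((2 * m : ℕ) : ℝ) = π / (2 * m) := by push_cast; ring
  rw [this]
  ring

lemma sum_abs_sin_odd {n : ℕ} (hn : 3 ≤ n) (he : Even n) :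
    ∑ a ∈ Finset.range n, |Real.sin ((2 * a + 1) * (π / n))| = 2 / Real.sin (π / n) := by
  obtain ⟨m, hm⟩ := he
  have hm2 : 2 ≤ m := by omega
  have hm0 : (m:ℝ) ≠ 0 := Nat.cast_ne_zero.2 (by omega)
  subst hm
  rw [show m + m = 2 * m by ring] at *
  have hcast : ((2 * m : ℕ) : ℝ) = 2 * m := by push_cast; ring
  simp only [hcast]
  rw [range_two_mul_sum]
  have h2 : ∀ a : ℕ, |Real.sin ((2 * ((m:ℝ) + a) + 1) * (π / (2 * m)))|
      = |Real.sin ((2 * (a:ℝ) + 1) * (π / (2 * m)))| := by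
    intro a
    have : (2 * ((m:ℝ) + a) + 1) * (π / (2 * m)) = (2 * (a:ℝ) + 1) * (π / (2 * m)) + π := by
      field_simp; ring
    rw [this, Real.sin_add]
    simp
  push_cast
  simp only [h2]
  have h3 : ∀ a ∈ Finset.range m, |Real.sin ((2 * (a:ℝ) + 1) * (π / (2 * m)))|
      = Real.sin ((2 * (a:ℝ) + 1) * (π / (2 * m))) := by
    intro a ha
    rw [abs_of_nonneg]
    apply Real.sin_nonneg_of_nonneg_of_le_pi
    · positivity
    · have ha' : (a:ℝ) ≤ m - 1 := by
        have := Finset.mem_range.1 ha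
        have : (a:ℝ) + 1 ≤ m := by exact_mod_cast this
        linarith
      have hpi := Real.pi_pos
      have h1 : (2*(a:ℝ)+1) ≤ 2*m := by linarith
      calc (2*(a:ℝ)+1) * (π/(2*(m:ℝ))) ≤ (2*(m:ℝ)) * (π/(2*(m:ℝ))) :=
            mul_le_mul_of_nonneg_right h1 (by positivity)
        _ = π := by field_simp
  rw [Finset.sum_congr rfl h3, sum_sin_odd_tele m (by omega)]
  ring

end trig

section expstuff
open Complex
variable {n : ℕ} [NeZero n]

lemma abs_exp_sub_exp (t : ℝ) :
    ‖Complex.exp (t * Complex.I) - Complex.exp (-t * Complex.I)‖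
      = 2 * |Real.sin t| := by
  have h : Complex.exp ((t:ℂ) * Complex.I) - Complex.exp (-(t:ℂ) * Complex.I)
      = 2 * Complex.I * Complex.sin t := by
    rw [Complex.sin]
    linear_combination (Complex.exp ((t:ℂ) * Complex.I) - Complex.exp (-(t:ℂ) * Complex.I)) * Complex.I_sq
  push_cast
  rw [h, norm_mul, norm_mul, Complex.norm_two, Complex.norm_I,
    ← Complex.ofReal_sin, Complex.norm_real, Real.norm_eq_abs]
  ring

lemma exp_neg_mul_exp (t : ℝ) :
    Complex.exp (-(t:ℂ) * Complex.I) * Complex.exp ((t:ℂ) * Complex.I) = 1 := by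
  rw [← Complex.exp_add, show -(t:ℂ) * Complex.I + (t:ℂ) * Complex.I = 0 by ring,
    Complex.exp_zero]

lemma exp_angle_injective (δ : ℕ) (g : ZMod n → ℝ)
    (hg : ∀ k, g k = Real.pi * (2 * k.val + δ) / n) :
    Function.Injective (fun k : ZMod n => Complex.exp ((g k : ℂ) * Complex.I)) := by
  have hπ := Real.pi_pos
  have hn0 : (n:ℝ) ≠ 0 := Nat.cast_ne_zero.2 (NeZero.ne n)
  intro k l h
  simp only [Complex.exp_eq_exp_iff_exists_int] at h
  obtain ⟨t, ht⟩ := h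
  have hC : ((g k : ℝ) : ℂ) = ((g l + 2 * Real.pi * t : ℝ) : ℂ) := by
    push_cast
    push_cast at ht
    linear_combination (-Complex.I) * ht +
      ((g k : ℂ) - (g l : ℂ) - 2 * (Real.pi : ℂ) * (t : ℂ)) * Complex.I_sq
  have hR : g k = g l + 2 * Real.pi * t := Complex.ofReal_inj.1 hC
  rw [hg k, hg l] at hR
  set a : ℝ := (k.val : ℝ) with ha
  set b : ℝ := (l.val : ℝ) with hb
  rw [div_eq_iff hn0] at hR
  have h3 : (2*Real.pi) * a = (2*Real.pi) * (b + t*n) := by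
    have h4 : Real.pi * (2 * b + δ) / n * n = Real.pi * (2 * b + δ) := by
      field_simp
    rw [add_mul, h4] at hR
    linear_combination hR
  have hInt : a = b + t*n := mul_left_cancel₀ (by positivity) h3
  rw [ha, hb] at hInt
  have hZ : (k.val : ℤ) = l.val + t * n := by exact_mod_cast hInt
  have hkv := ZMod.val_lt k
  have hlv := ZMod.val_lt l
  have hkv' : ((k.val:ℤ)) < n := by exact_mod_cast hkv
  have hlv' : ((l.val:ℤ)) < n := by exact_mod_cast hlv
  have hn' : (0:ℤ) < n := by exact_mod_cast Nat.pos_of_ne_zero (NeZero.ne n)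
  have ht0 : t = 0 := by
    have h1 : t < 1 := by
      by_contra hcon
      push_neg at hcon
      have h5 : (1:ℤ) * n ≤ t * n := mul_le_mul_of_nonneg_right hcon hn'.le
      have h6 : (0:ℤ) ≤ (l.val:ℤ) := Int.natCast_nonneg _
      linarith
    have h2 : (-1:ℤ) < t := by
      by_contra hcon
      push_neg at hcon
      have h5 : t * n ≤ (-1:ℤ) * n := mul_le_mul_of_nonneg_right hcon hn'.le
      have h6 : (0:ℤ) ≤ (k.val:ℤ) := Int.natCast_nonneg _
      linarith
    omega
  rw [ht0, zero_mul, add_zero] at hZ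
  exact ZMod.val_injective n (Nat.cast_injective hZ)


end expstuff

section part1
variable {n : ℕ} [NeZero n]

lemma energyM (hn : 3 ≤ n) (heven : Even n)
    (Sm : Matrix (ZMod n) (ZMod n) ℝ)
    (hm : ∀ i j : ZMod n, Sm i j = if j = i + 1 then 1 else if i = j + 1 then -1 else 0) :
    skewEnergy Sm = 4 * Real.cot (Real.pi / n) := by
  have hπ := Real.pi_pos
  have hn0 : (n:ℝ) ≠ 0 := Nat.cast_ne_zero.2 (NeZero.ne n)
  have hn0C : (n:ℂ) ≠ 0 := Nat.cast_ne_zero.2 (NeZero.ne n)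
  set θ : ZMod n → ℝ := fun k => Real.pi * (2 * k.val + 0) / n with hθ
  set z : ZMod n → ℂ := fun k => Complex.exp ((θ k : ℂ) * Complex.I) with hz
  set d : ZMod n → ℂ := fun k =>
    Complex.exp ((θ k : ℂ) * Complex.I) - Complex.exp (-(θ k : ℂ) * Complex.I) with hd
  set U : Matrix (ZMod n) (ZMod n) ℂ := Matrix.of (fun j k => z k ^ j.val) with hU
  have hzn : ∀ k, z k ^ n = 1 := by
    intro k
    rw [hz]
    rw [← Complex.exp_nat_mul]
    have : (n:ℂ) * ((θ k : ℂ) * Complex.I) = (k.val : ℕ) * (2 * (Real.pi:ℂ) * Complex.I) := by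
      rw [hθ]
      push_cast
      field_simp
      ring
    rw [this, Complex.exp_nat_mul, Complex.exp_two_pi_mul_I, one_pow]
  have hzne : ∀ k, z k ≠ 0 := fun k => Complex.exp_ne_zero _
  have hmod : ∀ k a, z k ^ (a % n) = z k ^ a := by
    intro k a
    conv_rhs => rw [← Nat.mod_add_div a n]
    rw [pow_add, pow_mul, hzn, one_pow, mul_one]
  have hcastpow : ∀ (k : ZMod n) (a : ℕ), z k ^ (((a : ℕ) : ZMod n)).val = z k ^ a := by
    intro k a
    rw [ZMod.val_natCast, hmod]
  have h2ne : (1 + 1 : ZMod n) ≠ 0 := by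
    intro hc
    have h2 : ((2 : ℕ) : ZMod n) = 0 := by push_cast; linear_combination hc
    rw [ZMod.natCast_eq_zero_iff] at h2
    exact absurd (Nat.le_of_dvd (by norm_num) h2) (by omega)
  -- the column equation
  have hcol : Sm.map Complex.ofReal * U = U * Matrix.diagonal d := by
    ext i k
    rw [Matrix.mul_apply, Matrix.mul_diagonal]
    have hii : (i + 1 : ZMod n) ≠ i - 1 := by
      intro hc
      apply h2ne
      linear_combination hc
    have hsum : ∀ j, (Sm.map Complex.ofReal) i j * U j k
        = (if j = i + 1 then U j k else 0) + (if j = i - 1 then -U j k else 0) := by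
      intro j
      rw [Matrix.map_apply, hm i j]
      have hiff : (i = j + 1) ↔ (j = i - 1) := by
        constructor
        · intro h; rw [h]; ring
        · intro h; rw [h]; ring
      by_cases h1 : j = i + 1
      · subst h1
        rw [if_pos rfl, if_pos rfl, if_neg hii]
        push_cast
        ring
      · by_cases h3 : j = i - 1
        · subst h3
          rw [if_neg (Ne.symm hii), if_pos (show i = i - 1 + 1 by ring),
            if_neg (Ne.symm hii), if_pos rfl]
          push_cast
          ring
        · have h4 : ¬ (i = j + 1) := fun hc => h3 (hiff.1 hc)
          rw [if_neg h1, if_neg h4, if_neg h1, if_neg h3]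
          push_cast
          ring
    rw [Finset.sum_congr rfl (fun j _ => hsum j), Finset.sum_add_distrib,
      Finset.sum_ite_eq' Finset.univ (i+1) (fun j => U j k),
      Finset.sum_ite_eq' Finset.univ (i-1) (fun j => -U j k),
      if_pos (Finset.mem_univ _), if_pos (Finset.mem_univ _)]
    show z k ^ (i+1).val + -(z k ^ (i-1).val) = z k ^ i.val * d k
    have e1 : z k ^ (i+1).val = z k ^ (i.val + 1) := by
      rw [show i + 1 = ((i.val + 1 : ℕ) : ZMod n) by push_cast [cast_val_eqX i]; ring,
        hcastpow]
    have e2 : z k ^ (i-1).val = z k ^ i.val * z k ^ (n-1) := by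
      rw [show i - 1 = ((i.val + (n - 1) : ℕ) : ZMod n) by
          push_cast [cast_val_eqX i, neg_one_eq_castX]; ring,
        hcastpow, pow_add]
    have e3 : z k ^ (n-1) = Complex.exp (-(θ k : ℂ) * Complex.I) := by
      have a1 : z k ^ (n-1) * z k = 1 := by
        rw [← pow_succ, Nat.sub_add_cancel (by omega), hzn]
      have a2 : Complex.exp (-(θ k : ℂ) * Complex.I) * z k = 1 := by
        rw [hz]
        rw [← Complex.exp_add,
          show -(θ k : ℂ) * Complex.I + (θ k : ℂ) * Complex.I = 0 by ring, Complex.exp_zero]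
      exact mul_right_cancel₀ (hzne k) (a1.trans a2.symm)
    rw [e1, e2, e3, pow_succ, hd]
    show z k ^ i.val * z k + -(z k ^ i.val * Complex.exp (-(θ k:ℂ) * Complex.I))
      = z k ^ i.val * (Complex.exp ((θ k:ℂ) * Complex.I) - Complex.exp (-(θ k:ℂ) * Complex.I))
    rw [hz]
    ring
  have hinj : Function.Injective z := by
    have h := exp_angle_injective (n := n) 0 θ (fun k => by rw [hθ]; norm_num)
    rw [hz]
    exact h
  have hdet : U.det ≠ 0 := det_ne_zero_of_pow_val z hinj U (fun j k => rfl)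
  have hE := skewEnergy_eq_sum Sm d U hdet hcol
  have habs : ∀ k, ‖d k‖ = 2 * |Real.sin (θ k)| := by
    intro k
    rw [hd]
    exact abs_exp_sub_exp (θ k)
  rw [hE]
  have hstep : ∑ k : ZMod n, ‖d k‖
      = ∑ a ∈ Finset.range n, (2 * |Real.sin (Real.pi * (2 * a + 0) / n)|) := by
    rw [← sum_zmod_val (fun a => 2 * |Real.sin (Real.pi * (2 * a + 0) / n)|)]
    exact Finset.sum_congr rfl fun k _ => by rw [habs k, hθ]
  rw [hstep]
  have hstep2 : ∑ a ∈ Finset.range n, (2 * |Real.sin (Real.pi * (2 * a + 0) / n)|)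
      = 2 * ∑ a ∈ Finset.range n, |Real.sin (2 * Real.pi * a / n)| := by
    rw [Finset.mul_sum]
    exact Finset.sum_congr rfl fun a _ => by
      rw [show Real.pi * (2 * (a:ℝ) + 0) / n = 2 * Real.pi * a / n by ring]
  rw [hstep2, sum_abs_sin_even hn heven]
  ring

end part1

section part2
variable {n : ℕ} [NeZero n]

lemma energyP (hn : 3 ≤ n) (heven : Even n)
    (Sm Sp : Matrix (ZMod n) (ZMod n) ℝ)
    (hm : ∀ i j : ZMod n, Sm i j = if j = i + 1 then 1 else if i = j + 1 then -1 else 0)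
    (hp : ∀ i j : ZMod n, Sp i j =
      if (i = -1 ∧ j = 0) ∨ (i = 0 ∧ j = -1) then -Sm i j else Sm i j) :
    skewEnergy Sp = 4 / Real.sin (Real.pi / n) := by
  have hπ := Real.pi_pos
  have hn0 : (n:ℝ) ≠ 0 := Nat.cast_ne_zero.2 (NeZero.ne n)
  have hn0C : (n:ℂ) ≠ 0 := Nat.cast_ne_zero.2 (NeZero.ne n)
  haveI : Fact (1 < n) := ⟨by omega⟩
  set φ : ZMod n → ℝ := fun k => Real.pi * (2 * k.val + 1) / n with hφ
  set w : ZMod n → ℂ := fun k => Complex.exp ((φ k : ℂ) * Complex.I) with hw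
  set d : ZMod n → ℂ := fun k =>
    Complex.exp ((φ k : ℂ) * Complex.I) - Complex.exp (-(φ k : ℂ) * Complex.I) with hd
  set U : Matrix (ZMod n) (ZMod n) ℂ := Matrix.of (fun j k => w k ^ j.val) with hU
  have hwn : ∀ k, w k ^ n = -1 := by
    intro k
    rw [hw, ← Complex.exp_nat_mul]
    have harg : (n:ℂ) * ((φ k : ℂ) * Complex.I)
        = ((2 * k.val + 1 : ℕ) : ℂ) * ((Real.pi:ℂ) * Complex.I) := by
      rw [hφ]
      push_cast
      field_simp
    rw [harg, Complex.exp_nat_mul, Complex.exp_pi_mul_I]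
    exact Odd.neg_one_pow ⟨k.val, by ring⟩
  have hwne : ∀ k, w k ≠ 0 := fun k => Complex.exp_ne_zero _
  have h1ne : (1 : ZMod n) ≠ 0 := by
    intro hc
    have h2 : ((1 : ℕ) : ZMod n) = 0 := by push_cast; exact hc
    rw [ZMod.natCast_eq_zero_iff] at h2
    exact absurd (Nat.le_of_dvd (by norm_num) h2) (by omega)
  have h2ne : (1 + 1 : ZMod n) ≠ 0 := by
    intro hc
    have h2 : ((2 : ℕ) : ZMod n) = 0 := by push_cast; linear_combination hc
    rw [ZMod.natCast_eq_zero_iff] at h2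
    exact absurd (Nat.le_of_dvd (by norm_num) h2) (by omega)
  have hm1ne0 : (-1 : ZMod n) ≠ 0 := by
    intro hc
    exact h1ne (by linear_combination -hc)
  have h0nem1 : (0 : ZMod n) ≠ -1 := fun hc => hm1ne0 hc.symm
  have hvm1 : (-1 : ZMod n).val = n - 1 := by
    rw [← neg_one_eq_castX, ZMod.val_cast_of_lt (by omega)]
  -- exp facts
  have hen : ∀ k, Complex.exp (-(φ k : ℂ) * Complex.I) * w k = 1 := by
    intro k
    rw [hw]
    exact exp_neg_mul_exp (φ k)
  have e3 : ∀ k, w k ^ (n-1) = -Complex.exp (-(φ k : ℂ) * Complex.I) := by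
    intro k
    have a1 : w k ^ (n-1) * w k = -1 := by
      rw [← pow_succ, Nat.sub_add_cancel (by omega), hwn]
    have a2 : (-Complex.exp (-(φ k : ℂ) * Complex.I)) * w k = -1 := by
      rw [neg_mul, hen]
    exact mul_right_cancel₀ (hwne k) (a1.trans a2.symm)
  have e5 : ∀ k, w k ^ (n-2) = -(Complex.exp (-(φ k : ℂ) * Complex.I))^2 := by
    intro k
    apply mul_right_cancel₀ (hwne k)
    have e4 : w k ^ (n-2) * w k = w k ^ (n-1) := by
      rw [← pow_succ]
      congr 1
      omega
    rw [e4, e3]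
    linear_combination Complex.exp (-(φ k : ℂ) * Complex.I) * hen k
  -- column equation
  have hcol : Sp.map Complex.ofReal * U = U * Matrix.diagonal d := by
    ext i k
    rw [Matrix.mul_apply, Matrix.mul_diagonal]
    have hii : (i + 1 : ZMod n) ≠ i - 1 := by
      intro hc
      apply h2ne
      linear_combination hc
    have hsum : ∀ j, (Sp.map Complex.ofReal) i j * U j k
        = (if j = i + 1 then (if i = -1 then (-1:ℂ) else 1) * U j k else 0)
          + (if j = i - 1 then (if i = 0 then (1:ℂ) else -1) * U j k else 0) := by
      intro j
      rw [Matrix.map_apply, hp i j, hm i j]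
      have hiff : (i = j + 1) ↔ (j = i - 1) := by
        constructor
        · intro h; rw [h]; ring
        · intro h; rw [h]; ring
      by_cases h1 : j = i + 1
      · subst h1
        rw [if_pos rfl, if_pos rfl, if_neg hii]
        by_cases hi : i = -1
        · rw [if_pos (Or.inl ⟨hi, by rw [hi]; ring⟩), if_pos hi]
          push_cast
          ring
        · have hcondf : ¬ ((i = -1 ∧ i + 1 = 0) ∨ (i = 0 ∧ i + 1 = -1)) := by
            rintro (⟨h, _⟩ | ⟨h0, h1'⟩)
            · exact hi h
            · rw [h0] at h1'
              apply h2ne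
              linear_combination h1'
          rw [if_neg hcondf, if_neg hi]
          push_cast
          ring
      · by_cases h3 : j = i - 1
        · subst h3
          rw [if_neg (Ne.symm hii), if_pos (show i = i - 1 + 1 by ring),
            if_neg (Ne.symm hii), if_pos rfl]
          by_cases hi0 : i = 0
          · rw [if_pos (Or.inr ⟨hi0, by rw [hi0]; ring⟩), if_pos hi0]
            push_cast
            ring
          · have hcondf : ¬ ((i = -1 ∧ i - 1 = 0) ∨ (i = 0 ∧ i - 1 = -1)) := by
              rintro (⟨hm1, h10⟩ | ⟨h, _⟩)
              · rw [hm1] at h10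
                apply h2ne
                linear_combination -h10
              · exact hi0 h
            rw [if_neg hcondf, if_neg hi0]
            push_cast
            ring
        · have h4 : ¬ (i = j + 1) := fun hc => h3 (hiff.1 hc)
          rw [if_neg h1, if_neg h4, if_neg h1, if_neg h3]
          split_ifs <;> push_cast <;> ring
    rw [Finset.sum_congr rfl (fun j _ => hsum j), Finset.sum_add_distrib,
      Finset.sum_ite_eq' Finset.univ (i+1) (fun j => (if i = -1 then (-1:ℂ) else 1) * U j k),
      Finset.sum_ite_eq' Finset.univ (i-1) (fun j => (if i = 0 then (1:ℂ) else -1) * U j k),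
      if_pos (Finset.mem_univ _), if_pos (Finset.mem_univ _)]
    show (if i = -1 then (-1:ℂ) else 1) * w k ^ (i+1).val
        + (if i = 0 then (1:ℂ) else -1) * w k ^ (i-1).val = w k ^ i.val * d k
    by_cases hi1 : i = -1
    · subst hi1
      have hikk : Complex.exp (-(φ k : ℂ) * Complex.I) * Complex.exp ((φ k : ℂ) * Complex.I) = 1 :=
        exp_neg_mul_exp (φ k)
      rw [if_pos rfl, if_neg hm1ne0,
        show (-1 + 1 : ZMod n) = 0 by ring, ZMod.val_zero, pow_zero,
        val_sub_one hm1ne0, hvm1,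
        show n - 1 - 1 = n - 2 by omega, e5, e3]
      simp only [hd, hw]
      linear_combination hikk
    · by_cases hi0 : i = 0
      · subst hi0
        rw [if_neg h0nem1, if_pos rfl,
          show (0 + 1 : ZMod n) = 1 by ring, ZMod.val_one,
          show (0 - 1 : ZMod n) = -1 by ring, hvm1, e3, ZMod.val_zero, pow_zero, pow_one]
        simp only [hd, hw]
        ring
      · rw [if_neg hi1, if_neg hi0, val_add_one hi1, val_sub_one hi0]
        obtain ⟨a, ha⟩ : ∃ a, i.val = a + 1 :=
          ⟨i.val - 1, by
            have := Nat.pos_of_ne_zero (fun h => hi0 ((ZMod.val_eq_zero i).1 h)); omega⟩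
        rw [ha, Nat.add_sub_cancel]
        simp only [hd, hw]
        have hikk : Complex.exp (-(φ k : ℂ) * Complex.I) * Complex.exp ((φ k : ℂ) * Complex.I) = 1 :=
          exp_neg_mul_exp (φ k)
        linear_combination (Complex.exp ((φ k : ℂ) * Complex.I) ^ a) * hikk
  -- determinant
  have hinj : Function.Injective w := by
    have h := exp_angle_injective (n := n) 1 φ (fun k => by rw [hφ]; norm_num)
    rw [hw]
    exact h
  have hdet : U.det ≠ 0 := det_ne_zero_of_pow_val w hinj U (fun j k => rfl)
  have hE := skewEnergy_eq_sum Sp d U hdet hcol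
  have habs : ∀ k, ‖d k‖ = 2 * |Real.sin (φ k)| := by
    intro k
    rw [hd]
    exact abs_exp_sub_exp (φ k)
  rw [hE]
  have hstep : ∑ k : ZMod n, ‖d k‖
      = ∑ a ∈ Finset.range n, (2 * |Real.sin (Real.pi * (2 * a + 1) / n)|) := by
    rw [← sum_zmod_val (fun a => 2 * |Real.sin (Real.pi * (2 * a + 1) / n)|)]
    exact Finset.sum_congr rfl fun k _ => by rw [habs k, hφ]
  rw [hstep]
  have hstep2 : ∑ a ∈ Finset.range n, (2 * |Real.sin (Real.pi * (2 * a + 1) / n)|)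
      = 2 * ∑ a ∈ Finset.range n, |Real.sin ((2 * a + 1) * (Real.pi / n))| := by
    rw [Finset.mul_sum]
    exact Finset.sum_congr rfl fun a _ => by
      rw [show Real.pi * (2 * (a:ℝ) + 1) / n = (2 * (a:ℝ) + 1) * (Real.pi / n) by ring]
  rw [hstep2, sum_abs_sin_odd hn heven]
  ring

end part2

/-- For even `n`, the skew energy of the uniformly oriented cycle `C_n⁻` (all arcs in the
same cyclic direction) equals `4 cot(π/n)`, while the skew energy of `C_n⁺` (all arcs in
one direction except one reversed arc) equals `4 csc(π/n)`. -/
theorem skewEnergy_even_cycle {n : ℕ} [NeZero n] (hn : 3 ≤ n) (heven : Even n)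
    (Sm Sp : Matrix (ZMod n) (ZMod n) ℝ)
    (hm : ∀ i j : ZMod n, Sm i j = if j = i + 1 then 1 else if i = j + 1 then -1 else 0)
    (hp : ∀ i j : ZMod n, Sp i j =
      if (i = -1 ∧ j = 0) ∨ (i = 0 ∧ j = -1) then -Sm i j else Sm i j) :
    skewEnergy Sm = 4 * Real.cot (Real.pi / n) ∧
    skewEnergy Sp = 4 / Real.sin (Real.pi / n) := by
  exact ⟨energyM hn heven Sm hm, energyP hn heven Sm Sp hm hp⟩
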